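/- If G is a (P₃ ∪ P₂, diamond)-free graph with clique number ω = 4, then χ(G) ≤ 5. -/

import Mathlib

open SimpleGraph

/-- `H` occurs as an induced subgraph of `G`. -/
def IsInducedCopy {α β : Type*} (H : SimpleGraph α) (G : SimpleGraph β) : Prop :=
  ∃ f : α ↪ β, ∀ a b : α, G.Adj (f a) (f b) ↔ H.Adj a b

/-- `G` is `H`-free: no induced copy of `H`. -/
def Free {α β : Type*} (G : SimpleGraph α) (H : SimpleGraph β) : Prop :=
  ¬ IsInducedCopy H G

/-- `P₃ ∪ P₂`: disjoint union of a path on 3 vertices and an edge. -/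
def P3UP2 : SimpleGraph (Fin 5) :=
  SimpleGraph.fromRel (fun a b => (a, b) ∈ [((0 : Fin 5), (1 : Fin 5)), (1, 2), (3, 4)])

/-- The diamond: `K₄` minus an edge. -/
def diamondG : SimpleGraph (Fin 4) :=
  SimpleGraph.fromRel (fun a b =>
    (a, b) ∈ [((0 : Fin 4), (2 : Fin 4)), (0, 3), (1, 2), (1, 3), (2, 3)])

/-- `2K₂`: two disjoint edges. -/
def twoK2 : SimpleGraph (Fin 4) :=
  SimpleGraph.fromRel (fun a b => (a, b) ∈ [((0 : Fin 4), (1 : Fin 4)), (2, 3)])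

/-- `P₄ ∪ P₂`. -/
def P4UP2 : SimpleGraph (Fin 6) :=
  SimpleGraph.fromRel (fun a b =>
    (a, b) ∈ [((0 : Fin 6), (1 : Fin 6)), (1, 2), (2, 3), (4, 5)])

/-- The cycle on `n` vertices (for `n ≥ 3`), as a graph on `ZMod n`. -/
def cycG (n : ℕ) : SimpleGraph (ZMod n) :=
  SimpleGraph.fromRel (fun a b => b = a + 1)

/-- A graph is perfect if every induced subgraph has chromatic number
equal to its clique number. -/
def IsPerfect {V : Type*} (G : SimpleGraph V) : Prop :=
  ∀ s : Set V, (G.induce s).chromaticNumber = ((G.induce s).cliqueNum : ℕ∞)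

/-- The set `C_{ij}` attached to a maximum clique enumerated by `f : Fin ω ↪ V`:
vertices outside the clique, non-adjacent to both `f i` and `f j`, where `(i,j)`
is the lexicographically least such pair (this closed form is equivalent to the
iterative definition removing earlier `C`-sets). -/
def Cset {V : Type*} (G : SimpleGraph V) {ω : ℕ} (f : Fin ω ↪ V) (i j : Fin ω) : Set V :=
  {v | v ∉ Set.range f ∧ ¬ G.Adj v (f i) ∧ ¬ G.Adj v (f j) ∧
    ∀ p q : Fin ω, p < q → ¬ G.Adj v (f p) → ¬ G.Adj v (f q) →
      i < p ∨ (i = p ∧ j ≤ q)}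

/-- The set `I_a` attached to a maximum clique enumerated by `f : Fin ω ↪ V`:
vertices outside the clique adjacent to every clique vertex except `f k`. -/
def Iset {V : Type*} (G : SimpleGraph V) {ω : ℕ} (f : Fin ω ↪ V) (k : Fin ω) : Set V :=
  {v | v ∉ Set.range f ∧ ¬ G.Adj v (f k) ∧ ∀ l : Fin ω, l ≠ k → G.Adj v (f l)}

section Helpers

variable {V : Type*} {G : SimpleGraph V}

lemma p3p2_copy (h1 : _root_.Free G P3UP2)
    (a b c d e : V)
    (hab : G.Adj a b) (hbc : G.Adj b c) (hde : G.Adj d e)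
    (hac : ¬ G.Adj a c) (had : ¬ G.Adj a d) (hae : ¬ G.Adj a e)
    (hbd : ¬ G.Adj b d) (hbe : ¬ G.Adj b e)
    (hcd : ¬ G.Adj c d) (hce : ¬ G.Adj c e)
    (nac : a ≠ c) (nad : a ≠ d) (nae : a ≠ e)
    (nbd : b ≠ d) (nbe : b ≠ e) (ncd : c ≠ d) (nce : c ≠ e) : False := by
  have nab : a ≠ b := hab.ne
  have nbc : b ≠ c := hbc.ne
  have nde : d ≠ e := hde.ne
  have hba := hab.symm
  have hcb := hbc.symm
  have hed := hde.symm
  have hca : ¬ G.Adj c a := fun h => hac h.symm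
  have hda : ¬ G.Adj d a := fun h => had h.symm
  have hea : ¬ G.Adj e a := fun h => hae h.symm
  have hdb : ¬ G.Adj d b := fun h => hbd h.symm
  have heb : ¬ G.Adj e b := fun h => hbe h.symm
  have hdc : ¬ G.Adj d c := fun h => hcd h.symm
  have hec : ¬ G.Adj e c := fun h => hce h.symm
  have nba := nab.symm; have nca := nac.symm; have nda := nad.symm
  have nea := nae.symm; have ncb := nbc.symm; have ndb := nbd.symm
  have neb := nbe.symm; have ndc := ncd.symm; have nec := nce.symm
  have ned := nde.symm
  apply h1
  refine ⟨⟨![a,b,c,d,e], ?_⟩, ?_⟩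
  · intro i j hij
    fin_cases i <;> fin_cases j <;>
      first
      | rfl
      | (exfalso
         simp only [Matrix.cons_val_zero, Matrix.cons_val_one, Matrix.head_cons,
           Matrix.cons_val_two, Matrix.tail_cons, Matrix.cons_val_three,
           Matrix.cons_val_four] at hij
         tauto)
  · intro i j
    fin_cases i <;> fin_cases j <;> (simp [P3UP2]; try assumption)

lemma diamond_copy (h2 : _root_.Free G diamondG)
    (a b c d : V)
    (hac : G.Adj a c) (had : G.Adj a d) (hbc : G.Adj b c) (hbd : G.Adj b d)
    (hcd : G.Adj c d) (hab : ¬ G.Adj a b) (nab : a ≠ b) : False := by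
  have hca := hac.symm; have hda := had.symm; have hcb := hbc.symm
  have hdb := hbd.symm; have hdc := hcd.symm
  have hba : ¬ G.Adj b a := fun h => hab h.symm
  have nac := hac.ne; have nad := had.ne; have nbc := hbc.ne
  have nbd := hbd.ne; have ncd := hcd.ne
  have nba := nab.symm; have nca := nac.symm; have nda := nad.symm
  have ncb := nbc.symm; have ndb := nbd.symm; have ndc := ncd.symm
  apply h2
  refine ⟨⟨![a,b,c,d], ?_⟩, ?_⟩
  · intro i j hij
    fin_cases i <;> fin_cases j <;>
      first
      | rfl
      | (exfalso
         simp only [Matrix.cons_val_zero, Matrix.cons_val_one, Matrix.head_cons,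
           Matrix.cons_val_two, Matrix.tail_cons, Matrix.cons_val_three] at hij
         tauto)
  · intro i j
    fin_cases i <;> fin_cases j <;> (simp [diamondG]; try assumption)

lemma fin4_aux : ∀ i j : Fin 4, i ≠ j →
    ∃ k l : Fin 4, k ≠ l ∧ k ≠ i ∧ k ≠ j ∧ l ≠ i ∧ l ≠ j := by decide

lemma fin4_fifth : ∀ a b c d e : Fin 4, a ≠ b → a ≠ c → b ≠ c →
    d ≠ a → d ≠ b → d ≠ c → e ≠ a → e ≠ b → e ≠ c → d = e := by decide

set_option synthInstance.maxHeartbeats 2000000 in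
set_option synthInstance.maxSize 2000 in
set_option maxHeartbeats 2000000 in
lemma pigeon : ∀ fx fz fy : Fin 4 → Bool,
    (∀ i j, fx i = true → fx j = true → i = j) →
    (∀ i j, fz i = true → fz j = true → i = j) →
    (∀ i j, fy i = true → fy j = true → i = j) →
    (∀ i j, i ≠ j → fx i = true ∨ fx j = true ∨ fz i = true ∨ fz j = true ∨
      fy i = true ∨ fy j = true) →
    ∃ a b c : Fin 4, a ≠ b ∧ a ≠ c ∧ b ≠ c ∧ fx a = true ∧ fz b = true ∧ fy c = true := by
  decide

variable (hK5 : ∀ a b c d e : V, G.Adj a b → G.Adj a c → G.Adj a d → G.Adj a e →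
    G.Adj b c → G.Adj b d → G.Adj b e → G.Adj c d → G.Adj c e → G.Adj d e → False)
variable {q : Fin 4 → V} (hqadj : ∀ i j, i ≠ j → G.Adj (q i) (q j))

include hK5 hqadj

lemma adj_unique (h2 : _root_.Free G diamondG) (v : V) (hv : ∀ i, v ≠ q i) {i j : Fin 4}
    (hi : G.Adj v (q i)) (hj : G.Adj v (q j)) : i = j := by
  by_contra hij
  obtain ⟨k, l, hkl, hki, hkj, hli, hlj⟩ := fin4_aux i j hij
  by_cases hk : G.Adj v (q k)
  · by_cases hl : G.Adj v (q l)
    · exact hK5 v (q i) (q j) (q k) (q l) hi hj hk hl (hqadj i j hij)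
        (hqadj i k (Ne.symm hki)) (hqadj i l (Ne.symm hli))
        (hqadj j k (Ne.symm hkj)) (hqadj j l (Ne.symm hlj)) (hqadj k l hkl)
    · exact diamond_copy h2 v (q l) (q i) (q j) hi hj (hqadj l i hli) (hqadj l j hlj)
        (hqadj i j hij) hl (hv l)
  · exact diamond_copy h2 v (q k) (q i) (q j) hi hj (hqadj k i hki) (hqadj k j hkj)
      (hqadj i j hij) hk (hv k)

lemma p3_labels (h1 : _root_.Free G P3UP2) (h2 : _root_.Free G diamondG)
    (x z y : V)
    (hx : ∀ i, x ≠ q i) (hz : ∀ i, z ≠ q i) (hy : ∀ i, y ≠ q i)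
    (hxz : G.Adj x z) (hzy : G.Adj z y) (hxy : ¬ G.Adj x y) (nxy : x ≠ y) :
    ∃ a b c : Fin 4, a ≠ b ∧ a ≠ c ∧ b ≠ c ∧
      G.Adj x (q a) ∧ G.Adj z (q b) ∧ G.Adj y (q c) := by
  classical
  have hit : ∀ i j : Fin 4, i ≠ j →
      G.Adj x (q i) ∨ G.Adj x (q j) ∨ G.Adj z (q i) ∨ G.Adj z (q j) ∨
      G.Adj y (q i) ∨ G.Adj y (q j) := by
    intro i j hij
    by_contra hcon
    push_neg at hcon
    obtain ⟨c1, c2, c3, c4, c5, c6⟩ := hcon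
    exact p3p2_copy h1 x z y (q i) (q j) hxz hzy (hqadj i j hij) hxy c1 c2 c3 c4 c5 c6
      nxy (hx i) (hx j) (hz i) (hz j) (hy i) (hy j)
  obtain ⟨a, b, c, hab, hac, hbc, ha, hb, hc⟩ := pigeon
    (fun i => decide (G.Adj x (q i))) (fun i => decide (G.Adj z (q i)))
    (fun i => decide (G.Adj y (q i)))
    (fun i j hi hj => adj_unique hK5 hqadj h2 x hx
      (of_decide_eq_true hi) (of_decide_eq_true hj))
    (fun i j hi hj => adj_unique hK5 hqadj h2 z hz
      (of_decide_eq_true hi) (of_decide_eq_true hj))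
    (fun i j hi hj => adj_unique hK5 hqadj h2 y hy
      (of_decide_eq_true hi) (of_decide_eq_true hj))
    (fun i j hij => by simpa only [decide_eq_true_eq] using hit i j hij)
  exact ⟨a, b, c, hab, hac, hbc, of_decide_eq_true ha, of_decide_eq_true hb,
    of_decide_eq_true hc⟩

lemma labelF (h1 : _root_.Free G P3UP2) (h2 : _root_.Free G diamondG)
    (v x y z : V)
    (hv : ∀ i, v ≠ q i) (hx : ∀ i, x ≠ q i) (hy : ∀ i, y ≠ q i) (hz : ∀ i, z ≠ q i)
    (hvx : G.Adj v x) (hvy : G.Adj v y) (hvz : G.Adj v z)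
    (hxy : ¬ G.Adj x y) (nxy : x ≠ y) (nzx : z ≠ x) (nzy : z ≠ y)
    {a b c : Fin 4} (ha : G.Adj x (q a)) (hb : G.Adj v (q b)) (hc : G.Adj y (q c))
    (hab : a ≠ b) (hac : a ≠ c) (hbc : b ≠ c) :
    ∃ d : Fin 4, G.Adj z (q d) ∧ d ≠ a ∧ d ≠ b ∧ d ≠ c := by
  by_cases hzx : G.Adj z x
  · by_cases hzy : G.Adj z y
    · obtain ⟨a1, d, c1, k1, k2, k3, ha1, hd, hc1⟩ :=
        p3_labels hK5 hqadj h1 h2 x z y hx hz hy hzx.symm hzy hxy nxy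
      have ea : a1 = a := adj_unique hK5 hqadj h2 x hx ha1 ha
      have ec : c1 = c := adj_unique hK5 hqadj h2 y hy hc1 hc
      subst ea; subst ec
      refine ⟨d, hd, Ne.symm k1, ?_, k3⟩
      intro hdb; subst hdb
      exact diamond_copy h2 x (q d) z v hzx.symm hvx.symm hd.symm hb.symm hvz.symm
        (fun h => hab (adj_unique hK5 hqadj h2 x hx ha h)) (hx d)
    · obtain ⟨d, b1, c1, k1, k2, k3, hd, hb1, hc1⟩ :=
        p3_labels hK5 hqadj h1 h2 z v y hz hv hy hvz.symm hvy hzy nzy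
      have eb : b1 = b := adj_unique hK5 hqadj h2 v hv hb1 hb
      have ec : c1 = c := adj_unique hK5 hqadj h2 y hy hc1 hc
      subst eb; subst ec
      refine ⟨d, hd, ?_, k1, k2⟩
      intro hda; subst hda
      exact diamond_copy h2 v (q d) z x hvz hvx hd.symm ha.symm hzx
        (fun h => hab.symm (adj_unique hK5 hqadj h2 v hv h hb).symm) (hv d)
  · by_cases hzy : G.Adj z y
    · obtain ⟨d, b1, a1, k1, k2, k3, hd, hb1, ha1⟩ :=
        p3_labels hK5 hqadj h1 h2 z v x hz hv hx hvz.symm hvx hzx nzx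
      have eb : b1 = b := adj_unique hK5 hqadj h2 v hv hb1 hb
      have ea : a1 = a := adj_unique hK5 hqadj h2 x hx ha1 ha
      subst eb; subst ea
      refine ⟨d, hd, k2, k1, ?_⟩
      intro hdc; subst hdc
      exact diamond_copy h2 v (q d) z y hvz hvy hd.symm hc.symm hzy
        (fun h => hbc.symm (adj_unique hK5 hqadj h2 v hv h hb)) (hv d)
    · obtain ⟨d, b1, a1, k1, k2, k3, hd, hb1, ha1⟩ :=
        p3_labels hK5 hqadj h1 h2 z v x hz hv hx hvz.symm hvx hzx nzx
      have eb : b1 = b := adj_unique hK5 hqadj h2 v hv hb1 hb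
      have ea : a1 = a := adj_unique hK5 hqadj h2 x hx ha1 ha
      subst eb; subst ea
      obtain ⟨d2, b2, c2, m1, m2, m3, hd2, hb2, hc2⟩ :=
        p3_labels hK5 hqadj h1 h2 z v y hz hv hy hvz.symm hvy hzy nzy
      have ed : d2 = d := adj_unique hK5 hqadj h2 z hz hd2 hd
      have ec : c2 = c := adj_unique hK5 hqadj h2 y hy hc2 hc
      exact ⟨d, hd, k2, k1, fun h => m2 (by rw [ed, ec]; exact h)⟩

lemma keyE (h1 : _root_.Free G P3UP2) (h2 : _root_.Free G diamondG)
    (v x y z w : V)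
    (hv : ∀ i, v ≠ q i) (hx : ∀ i, x ≠ q i) (hy : ∀ i, y ≠ q i)
    (hz : ∀ i, z ≠ q i) (hw : ∀ i, w ≠ q i)
    (hvx : G.Adj v x) (hvy : G.Adj v y) (hvz : G.Adj v z) (hvw : G.Adj v w)
    (hxy : ¬ G.Adj x y) (nxy : x ≠ y) (nzx : z ≠ x) (nzy : z ≠ y)
    (nwx : w ≠ x) (nwy : w ≠ y) (nzw : z ≠ w) : False := by
  obtain ⟨a, b, c, hab, hac, hbc, ha, hb, hc⟩ :=
    p3_labels hK5 hqadj h1 h2 x v y hx hv hy hvx.symm hvy hxy nxy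
  obtain ⟨d, hd, hda, hdb, hdc⟩ :=
    labelF hK5 hqadj h1 h2 v x y z hv hx hy hz hvx hvy hvz hxy nxy nzx nzy
      ha hb hc hab hac hbc
  obtain ⟨e, he, hea, heb, hec⟩ :=
    labelF hK5 hqadj h1 h2 v x y w hv hx hy hw hvx hvy hvw hxy nxy nwx nwy
      ha hb hc hab hac hbc
  have hde : d = e := fin4_fifth a b c d e hab hac hbc hda hdb hdc hea heb hec
  subst hde
  by_cases hzw : G.Adj z w
  · exact diamond_copy h2 v (q d) z w hvz hvw hd.symm he.symm hzw
      (fun h => hdb (adj_unique hK5 hqadj h2 v hv h hb)) (hv d)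
  · obtain ⟨d1, b1, e1, m1, m2, m3, hd1, hb1, he1⟩ :=
      p3_labels hK5 hqadj h1 h2 z v w hz hv hw hvz.symm hvw hzw nzw
    have e1d : d1 = d := adj_unique hK5 hqadj h2 z hz hd1 hd
    have e2d : e1 = d := adj_unique hK5 hqadj h2 w hw he1 he
    rw [e1d, e2d] at m2
    exact m2 rfl

omit hK5 hqadj in
lemma card_four {α : Type*} [DecidableEq α] {s : Finset α} (h : s.card = 4) :
    ∃ a b c d : α, a ≠ b ∧ a ≠ c ∧ a ≠ d ∧ b ≠ c ∧ b ≠ d ∧ c ≠ d ∧ s = {a, b, c, d} := by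
  rw [show (4 : ℕ) = 3 + 1 from rfl, Finset.card_eq_succ] at h
  obtain ⟨a, t, hat, rfl, ht⟩ := h
  rw [Finset.card_eq_three] at ht
  obtain ⟨b, c, d, nbc, nbd, ncd, rfl⟩ := ht
  simp only [Finset.mem_insert, Finset.mem_singleton, not_or] at hat
  exact ⟨a, b, c, d, hat.1, hat.2.1, hat.2.2, nbc, nbd, ncd, rfl⟩

lemma deg_le [Fintype V] [DecidableEq V] [DecidableRel G.Adj]
    (h1 : _root_.Free G P3UP2) (h2 : _root_.Free G diamondG)
    (v : V) (hv : ∀ i, v ≠ q i) : (G.neighborFinset v).card ≤ 4 := by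
  by_contra hcon
  push_neg at hcon
  set s := G.neighborFinset v with hs
  set SN := s.filter (fun u => ∀ i, u ≠ q i) with hSN
  set QN := s.filter (fun u => ∃ i, u = q i) with hQN
  have hQcard : QN.card ≤ 1 := by
    apply Finset.card_le_one.mpr
    intro u1 hu1 u2 hu2
    simp only [hQN, Finset.mem_filter, hs, mem_neighborFinset] at hu1 hu2
    obtain ⟨a1, i, hi⟩ := hu1
    obtain ⟨a2, j, hj⟩ := hu2
    subst hi; subst hj
    rw [adj_unique hK5 hqadj h2 v hv a1 a2]
  have hsub : s ⊆ SN ∪ QN := by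
    intro u hu
    by_cases h : ∀ i, u ≠ q i
    · exact Finset.mem_union_left _ (Finset.mem_filter.mpr ⟨hu, h⟩)
    · push_neg at h
      obtain ⟨i, hi⟩ := h
      exact Finset.mem_union_right _ (Finset.mem_filter.mpr ⟨hu, ⟨i, hi⟩⟩)
  have hle : s.card ≤ SN.card + QN.card :=
    (Finset.card_le_card hsub).trans (Finset.card_union_le _ _)
  have h4 : 4 ≤ SN.card := by omega
  obtain ⟨t, hts, ht4⟩ := Finset.exists_subset_card_eq h4
  obtain ⟨x, y, z, w, nxy, nxz, nxw, nyz, nyw, nzw, rfl⟩ := card_four ht4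
  have hmx := hts (by simp : x ∈ ({x, y, z, w} : Finset V))
  have hmy := hts (by simp : y ∈ ({x, y, z, w} : Finset V))
  have hmz := hts (by simp : z ∈ ({x, y, z, w} : Finset V))
  have hmw := hts (by simp : w ∈ ({x, y, z, w} : Finset V))
  simp only [hSN, Finset.mem_filter, hs, mem_neighborFinset] at hmx hmy hmz hmw
  obtain ⟨hvx, hx⟩ := hmx
  obtain ⟨hvy, hy⟩ := hmy
  obtain ⟨hvz, hz⟩ := hmz
  obtain ⟨hvw, hw⟩ := hmw
  by_cases axy : G.Adj x y
  · by_cases axz : G.Adj x z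
    · by_cases axw : G.Adj x w
      · by_cases ayz : G.Adj y z
        · by_cases ayw : G.Adj y w
          · by_cases azw : G.Adj z w
            · exact hK5 v x y z w hvx hvy hvz hvw axy axz axw ayz ayw azw
            · exact keyE hK5 hqadj h1 h2 v z w x y hv hz hw hx hy hvz hvw hvx hvy
                azw nzw nxz nxw nyz nyw nxy
          · exact keyE hK5 hqadj h1 h2 v y w x z hv hy hw hx hz hvy hvw hvx hvz
              ayw nyw nxy nxw nyz.symm nzw nxz
        · exact keyE hK5 hqadj h1 h2 v y z x w hv hy hz hx hw hvy hvz hvx hvw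
            ayz nyz nxy nxz nyw.symm nzw.symm nxw
      · exact keyE hK5 hqadj h1 h2 v x w y z hv hx hw hy hz hvx hvw hvy hvz
          axw nxw nxy.symm nyw nxz.symm nzw nyz
    · exact keyE hK5 hqadj h1 h2 v x z y w hv hx hz hy hw hvx hvz hvy hvw
        axz nxz nxy.symm nyz nxw.symm nzw.symm nyw
  · exact keyE hK5 hqadj h1 h2 v x y z w hv hx hy hz hw hvx hvy hvz hvw
      axy nxy nxz.symm nyz.symm nxw.symm nyw.symm nzw

end Helpers

section Induction

universe u

lemma free_comap {V : Type*} {W : Type*} {α : Type*} {G : SimpleGraph V}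
    {H : SimpleGraph α} (hf : _root_.Free G H) (emb : W ↪ V) :
    _root_.Free (G.comap emb) H := by
  rintro ⟨f, hf'⟩
  exact hf ⟨f.trans emb, fun a b => hf' a b⟩

lemma aux : ∀ (n : ℕ) (V : Type u) [Fintype V] (G : SimpleGraph V),
    Fintype.card V ≤ n → _root_.Free G P3UP2 → _root_.Free G diamondG →
    (∀ a b c d e : V, G.Adj a b → G.Adj a c → G.Adj a d → G.Adj a e →
      G.Adj b c → G.Adj b d → G.Adj b e → G.Adj c d → G.Adj c e → G.Adj d e → False) →
    ∀ q : Fin 4 → V, (∀ i j, i ≠ j → G.Adj (q i) (q j)) → G.Colorable 5 := by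
  intro n
  induction n with
  | zero =>
    intro V _ G hcard _ _ _ _ _
    exact (G.colorable_of_fintype).mono (by omega)
  | succ n ih =>
    intro V _ G hcard h1 h2 hK5 q hqadj
    classical
    by_cases hout : ∃ v : V, ∀ i, v ≠ q i
    · obtain ⟨v, hv⟩ := hout
      have hdeg : (G.neighborFinset v).card ≤ 4 := deg_le hK5 hqadj h1 h2 v hv
      let emb : {u : V // u ≠ v} ↪ V := Function.Embedding.subtype _
      have hcard' : Fintype.card {u : V // u ≠ v} ≤ n := by
        have hlt : Fintype.card {u : V // u ≠ v} < Fintype.card V :=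
          Fintype.card_subtype_lt (x := v) (by simp)
        omega
      have hK5' : ∀ a b c d e : {u : V // u ≠ v},
          (G.comap emb).Adj a b → (G.comap emb).Adj a c → (G.comap emb).Adj a d →
          (G.comap emb).Adj a e → (G.comap emb).Adj b c → (G.comap emb).Adj b d →
          (G.comap emb).Adj b e → (G.comap emb).Adj c d → (G.comap emb).Adj c e →
          (G.comap emb).Adj d e → False := by
        intro a b c d e k1 k2 k3 k4 k5 k6 k7 k8 k9 k10
        exact hK5 (emb a) (emb b) (emb c) (emb d) (emb e) k1 k2 k3 k4 k5 k6 k7 k8 k9 k10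
      have hC' : (G.comap emb).Colorable 5 :=
        ih {u : V // u ≠ v} (G.comap emb) hcard' (free_comap h1 emb) (free_comap h2 emb)
          hK5' (fun i => ⟨q i, fun h => hv i h.symm⟩)
          (fun i j hij => hqadj i j hij)
      obtain ⟨C⟩ := hC'
      have hexc : ∃ c0 : Fin 5, ∀ u (hu : u ∈ G.neighborFinset v),
          C ⟨u, SimpleGraph.Adj.ne' (by rwa [SimpleGraph.mem_neighborFinset] at hu)⟩ ≠ c0 := by
        set used : Finset (Fin 5) := (G.neighborFinset v).attach.image
          (fun u => C ⟨u.1, SimpleGraph.Adj.ne'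
            (by have hu2 := u.2; rwa [SimpleGraph.mem_neighborFinset] at hu2)⟩) with hused
        have hcardu : used.card ≤ 4 := by
          refine le_trans Finset.card_image_le ?_
          rw [Finset.card_attach]
          exact hdeg
        have : ∃ c0 : Fin 5, c0 ∉ used := by
          by_contra hall
          push_neg at hall
          have hsub : (Finset.univ : Finset (Fin 5)) ⊆ used := fun c _ => hall c
          have := Finset.card_le_card hsub
          simp only [Finset.card_univ, Fintype.card_fin] at this
          omega
        obtain ⟨c0, hc0⟩ := this
        refine ⟨c0, fun u hu heq => hc0 ?_⟩
        rw [hused]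
        apply Finset.mem_image.mpr
        exact ⟨⟨u, hu⟩, Finset.mem_attach _ _, heq⟩
      obtain ⟨c0, hc0⟩ := hexc
      refine ⟨SimpleGraph.Coloring.mk
        (fun u => if h : u = v then c0 else C ⟨u, h⟩) ?_⟩
      intro u1 u2 hab
      by_cases ha : u1 = v
      · have hb : u2 ≠ v := fun h => G.irrefl (h ▸ ha ▸ hab)
        simp only [dif_pos ha, dif_neg hb]
        intro heq
        exact hc0 u2 (by rw [SimpleGraph.mem_neighborFinset]; exact ha ▸ hab) heq.symm
      · by_cases hb : u2 = v
        · simp only [dif_neg ha, dif_pos hb]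
          intro heq
          exact hc0 u1 (by rw [SimpleGraph.mem_neighborFinset]; exact (hb ▸ hab).symm) heq
        · simp only [dif_neg ha, dif_neg hb]
          exact C.valid (show (G.comap emb).Adj ⟨u1, ha⟩ ⟨u2, hb⟩ from hab)
    · push_neg at hout
      have hsurj : Function.Surjective q := by
        intro u
        obtain ⟨i, hi⟩ := hout u
        exact ⟨i, hi.symm⟩
      have hle : Fintype.card V ≤ 4 := by
        have := Fintype.card_le_of_surjective q hsurj
        simpa using this
      exact (G.colorable_of_fintype).mono (by omega)

end Induction

theorem stmt14 {V : Type*} [Fintype V] (G : SimpleGraph V) (h1 : _root_.Free G P3UP2)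
    (h2 : _root_.Free G diamondG) (hω : G.cliqueNum = 4) :
    G.chromaticNumber ≤ (5 : ℕ∞) := by
  classical
  have hK5 : ∀ a b c d e : V, G.Adj a b → G.Adj a c → G.Adj a d → G.Adj a e →
      G.Adj b c → G.Adj b d → G.Adj b e → G.Adj c d → G.Adj c e → G.Adj d e → False := by
    intro a b c d e k1 k2 k3 k4 k5 k6 k7 k8 k9 k10
    have hcl : G.IsClique (↑({a, b, c, d, e} : Finset V)) := by
      simp only [Finset.coe_insert, Finset.coe_singleton]
      intro x hx y hy hxy
      simp only [Set.mem_insert_iff, Set.mem_singleton_iff] at hx hy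
      rcases hx with rfl | rfl | rfl | rfl | rfl <;>
        rcases hy with rfl | rfl | rfl | rfl | rfl <;>
        first
        | exact absurd rfl hxy
        | assumption
        | (apply SimpleGraph.Adj.symm; assumption)
    have hcard : ({a, b, c, d, e} : Finset V).card = 5 := by
      rw [Finset.card_insert_of_notMem (by simp [k1.ne, k2.ne, k3.ne, k4.ne]),
        Finset.card_insert_of_notMem (by simp [k5.ne, k6.ne, k7.ne]),
        Finset.card_insert_of_notMem (by simp [k8.ne, k9.ne]),
        Finset.card_insert_of_notMem (by simp [k10.ne]),
        Finset.card_singleton]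
    have h5 : ({a, b, c, d, e} : Finset V).card ≤ G.cliqueNum :=
      @SimpleGraph.IsClique.card_le_cliqueNum V G _ ({a, b, c, d, e} : Finset V) hcl
    rw [hcard, hω] at h5
    omega
  obtain ⟨s, hs⟩ := G.exists_isNClique_cliqueNum
  rw [hω] at hs
  obtain ⟨a, b, c, d, nab, nac, nad, nbc, nbd, ncd, rfl⟩ := card_four hs.2
  have hcl := hs.1
  have hab : G.Adj a b := hcl (by simp) (by simp) nab
  have hac : G.Adj a c := hcl (by simp) (by simp) nac
  have had : G.Adj a d := hcl (by simp) (by simp) nad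
  have hbc : G.Adj b c := hcl (by simp) (by simp) nbc
  have hbd : G.Adj b d := hcl (by simp) (by simp) nbd
  have hcd : G.Adj c d := hcl (by simp) (by simp) ncd
  have hqadj : ∀ i j : Fin 4, i ≠ j → G.Adj (![a, b, c, d] i) (![a, b, c, d] j) := by
    intro i j hij
    fin_cases i <;> fin_cases j <;>
      simp only [Matrix.cons_val_zero, Matrix.cons_val_one, Matrix.head_cons,
        Matrix.cons_val_two, Matrix.tail_cons, Matrix.cons_val_three] <;>
      first
      | exact absurd rfl hij
      | assumption
      | (apply SimpleGraph.Adj.symm; assumption)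
  have hcol : G.Colorable 5 := aux (Fintype.card V) V G le_rfl h1 h2 hK5 ![a, b, c, d] hqadj
  exact_mod_cast hcol.chromaticNumber_le
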